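/- Let A, B be finite sets, M a function minion on (A, B), F an Abelian-bounded group, k ≥ 1, and φ: M → Pol(ℤ^k, F) a minion homomorphism. Then there exist numbers P, N ∈ ℕ such that for every n ∈ ℕ and every f ∈ M^{(n)} with φ(f) not the trivial homomorphism, there exist r ≤ P pairwise commuting elements s₁, …, s_r ∈ F and integer vectors c̄_{ij} ∈ ℤ^k (i ∈ [n], j ∈ [r]) such that φ(f)(x̄₁, …, x̄ₙ) = ∏_{j=1}^{r} s_j^{c̄_{1j}·x̄₁ + ⋯ + c̄_{nj}·x̄ₙ} for all x̄₁, …, x̄ₙ ∈ ℤ^k, and |c̄_{11}| + ⋯ + |c̄_{nr}| ≤ N, where c̄·x̄ is the standard dot product and |c̄| is the sum of the absolute values of the coordinates of c̄. -/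

import Mathlib

/-- A subgroup is abelian if all its elements commute. -/
def IsAbelianSubgroup {G : Type*} [Group G] (H : Subgroup G) : Prop :=
  ∀ a ∈ H, ∀ b ∈ H, a * b = b * a

/-- A maximal abelian subgroup. -/
def IsMaximalAbelianSubgroup {G : Type*} [Group G] (H : Subgroup G) : Prop :=
  IsAbelianSubgroup H ∧ ∀ K : Subgroup G, IsAbelianSubgroup K → H ≤ K → K = H

/-- A group is Abelian-bounded if (A1) every abelian subgroup is a finitely
generated free abelian group, and (A2) every nontrivial abelian subgroup is
contained in only finitely many maximal abelian subgroups. -/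
def AbelianBounded (G : Type*) [Group G] : Prop :=
  (∀ H : Subgroup G, IsAbelianSubgroup H →
      ∃ n : ℕ, Nonempty (H ≃* Multiplicative (Fin n → ℤ))) ∧
  (∀ H : Subgroup G, IsAbelianSubgroup H → H ≠ ⊥ →
      {K : Subgroup G | IsMaximalAbelianSubgroup K ∧ H ≤ K}.Finite)

/-- Abelian-bounded groups are torsion-free. -/
lemma abelianBounded_torsionFree {F : Type} [Group F] (hF : AbelianBounded F)
    (t : F) (d : ℕ) (hd : 0 < d) (h : t ^ d = 1) : t = 1 := by
  set H : Subgroup F := Subgroup.closure {t} with hH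
  have habel : IsAbelianSubgroup H := by
    intro a ha b hb
    rw [hH, Subgroup.mem_closure_singleton] at ha hb
    obtain ⟨m, rfl⟩ := ha; obtain ⟨m', rfl⟩ := hb
    rw [← zpow_add, ← zpow_add, add_comm]
  obtain ⟨r, ⟨eqv⟩⟩ := hF.1 H habel
  have ht : t ∈ H := Subgroup.subset_closure (Set.mem_singleton t)
  have hy : (eqv ⟨t, ht⟩) ^ d = 1 := by
    rw [← map_pow]
    have : (⟨t, ht⟩ : H) ^ d = 1 := by
      ext; simpa using h
    rw [this, map_one]
  have hz : d • (eqv ⟨t, ht⟩).toAdd = 0 := by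
    rw [← toAdd_pow, hy]; rfl
  have htoadd : (eqv ⟨t, ht⟩).toAdd = 0 := by
    funext v
    have h2 : (d : ℤ) * (eqv ⟨t, ht⟩).toAdd v = 0 := by
      have := congrFun hz v
      simpa [nsmul_eq_mul] using this
    have hd' : (d : ℤ) ≠ 0 := by exact_mod_cast hd.ne'
    have := mul_eq_zero.1 h2
    exact this.resolve_left hd'
  have hy1 : eqv ⟨t, ht⟩ = 1 := by
    rw [← ofAdd_toAdd (eqv ⟨t, ht⟩), htoadd]; rfl
  have hte : (⟨t, ht⟩ : H) = 1 := eqv.injective (by rw [hy1, map_one])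
  exact congrArg Subtype.val hte

def basv (n k : ℕ) (i : Fin n) (v : Fin k) : Fin n → Fin k → ℤ := Pi.single i (Pi.single v 1)

lemma sum_zsmul_basv (n k : ℕ) (z : Fin n → Fin k → ℤ) :
    ∑ p : Fin n × Fin k, z p.1 p.2 • basv n k p.1 p.2 = z := by
  funext i v
  simp [basv, Fintype.sum_prod_type, Finset.sum_apply, Pi.single_apply, mul_ite, mul_one,
    mul_zero, ite_apply, Pi.mul_apply, Finset.sum_ite_eq, Finset.sum_ite_eq']

/-- If `M` is a function minion on finite sets `(A, B)`, `F` an Abelian-bounded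
group, and `φ : M → Pol(ℤ^k, F)` a minion homomorphism, then there are `P, N`
such that every `φ(f)` which is not the trivial homomorphism has the form
`x̄ ↦ ∏_{j≤r} s_j ^ (c̄_{1j}·x̄₁ + ⋯ + c̄_{nj}·x̄ₙ)` with `r ≤ P`, commuting
`s_j`, and total coefficient size at most `N`. -/
theorem minion_hom_to_abelianBounded_group
    {A B : Type} [Finite A] [Finite B]
    (M : ∀ n : ℕ, Set ((Fin n → A) → B))
    (hMne : ∃ n f, f ∈ M n)
    (hMminor : ∀ (n n' : ℕ) (π : Fin n → Fin n') (f : (Fin n → A) → B),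
        f ∈ M n → (fun x : Fin n' → A => f (fun j => x (π j))) ∈ M n')
    {F : Type} [Group F] (hF : AbelianBounded F)
    (k : ℕ) (hk : 1 ≤ k)
    (φ : ∀ n : ℕ, {f : (Fin n → A) → B // f ∈ M n} → ((Fin n → (Fin k → ℤ)) → F))
    (hhom : ∀ n f, ∀ x y : Fin n → (Fin k → ℤ), φ n f (x + y) = φ n f x * φ n f y)
    (hminor : ∀ (n n' : ℕ) (π : Fin n → Fin n')
        (f : {f : (Fin n → A) → B // f ∈ M n})
        (g : {g : (Fin n' → A) → B // g ∈ M n'}),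
        (∀ x, g.1 x = f.1 (fun j => x (π j))) →
        ∀ x, φ n' g x = φ n f (fun j => x (π j))) :
    ∃ P N : ℕ, ∀ (n : ℕ) (f : {f : (Fin n → A) → B // f ∈ M n}),
      (∃ x, φ n f x ≠ 1) →
      ∃ (r : ℕ) (_ : r ≤ P) (s : Fin r → F) (c : Fin n → Fin r → (Fin k → ℤ)),
        (∀ j j' : Fin r, s j * s j' = s j' * s j) ∧
        (∀ x : Fin n → (Fin k → ℤ),
          φ n f x = ((List.finRange r).map
            (fun j => s j ^ (∑ i, ∑ v, c i j v * x i v))).prod) ∧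
        (∑ i, ∑ j, ∑ v, (c i j v).natAbs) ≤ N := by
  classical
  haveI : Fintype ((Fin 2 → A) → B) := Fintype.ofFinite _
  set M2 : Type := {g : (Fin 2 → A) → B // g ∈ M 2} with hM2
  haveI : Fintype M2 := Fintype.ofFinite _
  set m2 : ℕ := Fintype.card M2 with hm2
  refine ⟨m2 * m2 * k, m2 * m2 * k, ?_⟩
  intro n f hne
  -- basic properties of the homomorphism
  have hcomm : ∀ x y, φ n f x * φ n f y = φ n f y * φ n f x := by
    intro x y; rw [← hhom, ← hhom, add_comm]
  have hzero : φ n f 0 = 1 := by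
    have h0 := hhom n f 0 0
    rw [add_zero] at h0
    exact (left_eq_mul.mp h0)
  -- binary minors
  have hmem2 : ∀ π : Fin n → Fin 2,
      (fun x : Fin 2 → A => f.1 (fun j => x (π j))) ∈ M 2 :=
    fun π => hMminor n 2 π f.1 f.2
  set mn2 : (Fin n → Fin 2) → M2 := fun π => ⟨_, hmem2 π⟩ with hmn2
  have hφ2 : ∀ (π : Fin n → Fin 2) x, φ 2 (mn2 π) x = φ n f (fun j => x (π j)) :=
    fun π x => hminor n 2 π f (mn2 π) (fun _ => rfl) x
  -- the support of f
  set S : Finset (Fin n) := Finset.univ.filter (fun i => ∃ v, φ n f (basv n k i v) ≠ 1) with hS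
  -- binary minors collapsing a set J to the first coordinate
  have keyJ : ∀ (J : Finset (Fin n)) (v : Fin k),
      φ 2 (mn2 (fun j => if j ∈ J then 0 else 1)) (basv 2 k 0 v)
        = φ n f (∑ i ∈ J, basv n k i v) := by
    intro J v
    rw [hφ2]
    congr 1
    funext j
    by_cases hj : j ∈ J <;>
      simp [basv, Finset.sum_apply, Pi.single_apply, Finset.sum_ite_eq, hj]
  have key1 : ∀ (i : Fin n) (v : Fin k),
      φ 2 (mn2 (fun j => if j = i then 0 else 1)) (basv 2 k 0 v)
        = φ n f (basv n k i v) := by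
    intro i v
    have := keyJ {i} v
    simpa [Finset.mem_singleton] using this
  -- power computation
  have powJ : ∀ (J : Finset (Fin n)) (t : Fin k → F),
      (∀ i ∈ J, ∀ v, φ n f (basv n k i v) = t v) →
      ∀ v, φ n f (∑ i ∈ J, basv n k i v) = t v ^ J.card := by
    intro J
    induction J using Finset.induction_on with
    | empty => intro t _ v; simpa using hzero
    | @insert a J ha ih =>
      intro t hJ v
      rw [Finset.sum_insert ha, hhom, hJ a (Finset.mem_insert_self a J),
        ih t (fun i hi v' => hJ i (Finset.mem_insert_of_mem hi) v'),
        Finset.card_insert_of_notMem ha, pow_succ']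
  -- torsion-freeness
  have htf : ∀ (t : F) (d : ℕ), 0 < d → t ^ d = 1 → t = 1 :=
    fun t d hd h => abelianBounded_torsionFree hF t d hd h
  -- the support is small
  have hScard : S.card ≤ m2 * m2 := by
    by_contra hgt
    push_neg at hgt
    set G : Fin n → M2 := fun i => mn2 (fun j => if j = i then 0 else 1) with hG
    obtain ⟨g₀, -, hg₀⟩ := Finset.exists_lt_card_fiber_of_mul_lt_card_of_maps_to
      (f := G) (s := S) (t := (Finset.univ : Finset M2))
      (fun a _ => Finset.mem_univ _) (by rw [Finset.card_univ]; exact hgt)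
    set I : Finset (Fin n) := S.filter (fun i => G i = g₀) with hI
    set t : Fin k → F := fun v => φ 2 g₀ (basv 2 k 0 v) with htdef
    have hIt : ∀ i ∈ I, ∀ v, φ n f (basv n k i v) = t v := by
      intro i hi v
      rw [← key1 i v, htdef]
      rw [hI, Finset.mem_filter] at hi
      rw [← hi.2]
    have hsub : ∀ j : Fin (m2 + 1), ∃ J ⊆ I, J.card = (j : ℕ) + 1 := by
      intro j
      have : (j : ℕ) + 1 ≤ I.card := by
        have := j.isLt; omega
      obtain ⟨J, hJ1, hJ2⟩ := Finset.exists_subset_card_eq this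
      exact ⟨J, hJ1, hJ2⟩
    choose Js hJsub hJcard using hsub
    set q : Fin (m2 + 1) → M2 := fun j => mn2 (fun j' => if j' ∈ Js j then 0 else 1) with hq
    have hqval : ∀ (j : Fin (m2 + 1)) (v : Fin k),
        φ 2 (q j) (basv 2 k 0 v) = t v ^ ((j : ℕ) + 1) := by
      intro j v
      rw [hq]
      rw [keyJ, powJ (Js j) t (fun i hi v' => hIt i (hJsub j hi) v'), hJcard]
    have hlt : Fintype.card M2 < Fintype.card (Fin (m2 + 1)) := by
      simp [hm2]
    obtain ⟨a, b, hab, hqeq⟩ := Fintype.exists_ne_map_eq_of_card_lt q hlt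
    have keyc : ∀ a b : Fin (m2 + 1), (a : ℕ) < (b : ℕ) → q a = q b → False := by
      intro a b hlt' hqe
      have ht1 : ∀ v, t v = 1 := by
        intro v
        have h1 : t v ^ ((a : ℕ) + 1) = t v ^ ((b : ℕ) + 1) := by
          rw [← hqval a v, ← hqval b v, hqe]
        have h3 : t v ^ ((b : ℕ) + 1) = t v ^ ((a : ℕ) + 1) * t v ^ ((b : ℕ) - (a : ℕ)) := by
          rw [← pow_add]; congr 1; omega
        have h2 : t v ^ ((b : ℕ) - (a : ℕ)) = 1 :=
          left_eq_mul.mp (h1.trans h3)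
        exact htf _ _ (by omega) h2
      -- but I contains a support element
      have hIne : I.Nonempty := Finset.card_pos.mp (by omega)
      obtain ⟨i₀, hi₀⟩ := hIne
      have hi₀S : i₀ ∈ S := (Finset.mem_filter.mp hi₀).1
      rw [hS, Finset.mem_filter] at hi₀S
      obtain ⟨v, hv⟩ := hi₀S.2
      exact hv (by rw [hIt i₀ hi₀ v, ht1 v])
    rcases Nat.lt_or_ge (a : ℕ) (b : ℕ) with h | h
    · exact keyc a b h hqeq
    · have : (b : ℕ) < (a : ℕ) := by
        rcases Nat.lt_or_ge (b : ℕ) (a : ℕ) with h' | h'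
        · exact h'
        · exact absurd (Fin.ext (le_antisymm h' h)) hab
      exact keyc b a this hqeq.symm
  -- the commutative range subgroup
  set H : Subgroup F :=
    { carrier := Set.range (φ n f)
      mul_mem' := by
        rintro a b ⟨u, rfl⟩ ⟨w, rfl⟩
        exact ⟨u + w, hhom n f u w⟩
      one_mem' := ⟨0, hzero⟩
      inv_mem' := by
        rintro a ⟨u, rfl⟩
        exact ⟨-u, eq_inv_of_mul_eq_one_left (by rw [← hhom, neg_add_cancel, hzero])⟩ } with hHdef
  letI : CommGroup H :=
    { (inferInstance : Group H) with
      mul_comm := by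
        rintro ⟨a, u, rfl⟩ ⟨b, w, rfl⟩
        exact Subtype.ext (hcomm u w) }
  set Ψ : Multiplicative (Fin n → Fin k → ℤ) →* H :=
    MonoidHom.mk' (fun z => ⟨φ n f z.toAdd, ⟨z.toAdd, rfl⟩⟩)
      (fun z w => Subtype.ext (hhom n f _ _)) with hΨ
  have hΨcoe : ∀ z : Fin n → Fin k → ℤ, (Ψ (Multiplicative.ofAdd z) : F) = φ n f z :=
    fun z => rfl
  have hdec : ∀ z : Fin n → Fin k → ℤ,
      Ψ (Multiplicative.ofAdd z)
        = ∏ p : Fin n × Fin k,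
            (Ψ (Multiplicative.ofAdd (basv n k p.1 p.2))) ^ (z p.1 p.2) := by
    intro z
    conv_lhs => rw [← sum_zsmul_basv n k z]
    rw [ofAdd_sum, map_prod]
    exact Finset.prod_congr rfl (fun p _ => by rw [ofAdd_zsmul, map_zpow])
  -- the enumeration of the support
  set m : ℕ := Fintype.card ↥S with hm
  have hmcard : m = S.card := Fintype.card_coe S
  set σ : Fin m → Fin n := fun a => ((Fintype.equivFin ↥S).symm a : ↥S) with hσ
  set ep : Fin m × Fin k ≃ Fin (m * k) := finProdFinEquiv with hep
  refine ⟨m * k, by rw [hmcard] at *; exact Nat.mul_le_mul_right k hScard,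
    fun j => φ n f (basv n k (σ (ep.symm j).1) (ep.symm j).2),
    fun i j v => if i = σ (ep.symm j).1 ∧ v = (ep.symm j).2 then 1 else 0,
    fun j j' => hcomm _ _, ?_, ?_⟩
  · -- the product formula
    intro x
    have exps : (fun j : Fin (m * k) =>
          φ n f (basv n k (σ (ep.symm j).1) (ep.symm j).2)
            ^ (∑ i, ∑ v, (if i = σ (ep.symm j).1 ∧ v = (ep.symm j).2 then (1:ℤ) else 0) * x i v))
        = fun j => φ n f (basv n k (σ (ep.symm j).1) (ep.symm j).2)
            ^ (x (σ (ep.symm j).1) ((ep.symm j).2)) := by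
      funext j
      congr 1
      simp [ite_and, ite_mul, one_mul, zero_mul, Finset.sum_ite_eq', Finset.sum_ite_eq]
    rw [exps]
    -- the element-level computation inside H
    set E : Fin n × Fin k → H := fun p => Ψ (Multiplicative.ofAdd (basv n k p.1 p.2)) with hE
    set T : Fin (m * k) → H := fun j =>
      (E (σ (ep.symm j).1, (ep.symm j).2)) ^ (x (σ (ep.symm j).1) ((ep.symm j).2)) with hT
    have hmain : Ψ (Multiplicative.ofAdd x) = ∏ j : Fin (m * k), T j := by
      rw [hdec x]
      have step1 : ∏ p : Fin n × Fin k, (E p) ^ (x p.1 p.2)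
          = ∏ i : Fin n, ∏ v : Fin k, (E (i, v)) ^ (x i v) :=
        Fintype.prod_prod_type _
      have hoff : ∀ i ∈ Finset.univ, i ∉ S → (∏ v : Fin k, (E (i, v)) ^ (x i v)) = 1 := by
        intro i _ hiS
        rw [hS, Finset.mem_filter] at hiS
        push_neg at hiS
        have : ∀ v, E (i, v) = 1 := by
          intro v
          exact Subtype.ext (hiS (Finset.mem_univ i) v)
        simp [this]
      have step2 : ∏ i : Fin n, ∏ v : Fin k, (E (i, v)) ^ (x i v)
          = ∏ i ∈ S, ∏ v : Fin k, (E (i, v)) ^ (x i v) :=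
        (Finset.prod_subset S.subset_univ hoff).symm
      have step3 : ∏ i ∈ S, ∏ v : Fin k, (E (i, v)) ^ (x i v)
          = ∏ a : Fin m, ∏ v : Fin k, (E (σ a, v)) ^ (x (σ a) v) := by
        rw [← Finset.prod_coe_sort S (fun i => ∏ v : Fin k, (E (i, v)) ^ (x i v))]
        exact (Equiv.prod_comp (Fintype.equivFin ↥S).symm
          (fun i : ↥S => ∏ v : Fin k, (E ((i : Fin n), v)) ^ (x (i : Fin n) v))).symm
      have step4 : ∏ a : Fin m, ∏ v : Fin k, (E (σ a, v)) ^ (x (σ a) v)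
          = ∏ q : Fin m × Fin k, (E (σ q.1, q.2)) ^ (x (σ q.1) q.2) :=
        (Fintype.prod_prod_type
          (f := fun q : Fin m × Fin k => (E (σ q.1, q.2)) ^ (x (σ q.1) q.2))).symm
      have step5 : ∏ q : Fin m × Fin k, (E (σ q.1, q.2)) ^ (x (σ q.1) q.2)
          = ∏ j : Fin (m * k), T j :=
        (Equiv.prod_comp ep.symm
          (fun q : Fin m × Fin k => (E (σ q.1, q.2)) ^ (x (σ q.1) q.2))).symm
      rw [step1, step2, step3, step4, step5]
    -- transfer to F
    have lhs : φ n f x = (Ψ (Multiplicative.ofAdd x) : F) := rfl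
    rw [lhs, hmain]
    have : ((∏ j : Fin (m * k), T j : H) : F)
        = ((List.finRange (m * k)).map (fun j => ((T j : F)))).prod := by
      rw [Fin.prod_univ_def]
      rw [show (List.finRange (m * k)).map (fun j => ((T j : F)))
            = ((List.finRange (m * k)).map T).map (fun h : H => (h : F))
          from List.map_map.symm]
      exact map_list_prod H.subtype _
    rw [this]
    congr 1
  · -- the size bound
    have : (∑ i, ∑ j : Fin (m * k), ∑ v,
        ((if i = σ (ep.symm j).1 ∧ v = (ep.symm j).2 then (1:ℤ) else 0)).natAbs) = m * k := by
      rw [Finset.sum_comm]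
      have : ∀ j : Fin (m * k), (∑ i, ∑ v,
          ((if i = σ (ep.symm j).1 ∧ v = (ep.symm j).2 then (1:ℤ) else 0)).natAbs) = 1 := by
        intro j
        simp [ite_and, apply_ite Int.natAbs, Finset.sum_ite_eq', Finset.sum_ite_eq]
      simp [this]
    rw [this]
    rw [hmcard]
    exact Nat.mul_le_mul_right k hScard
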